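/- arXiv:1210.6168 — 2 statements merged into one kernel-verified Lean document; each statement's English description precedes it below -/
import Mathlib

section
/- For every s ≥ 0, ∫_ℝ tanh(s + √s·z) · (2π)^{−1/2} e^{−z²/2} dz = ∫_ℝ tanh²(s + √s·z) · (2π)^{−1/2} e^{−z²/2} dz. -/
open MeasureTheory Real

private lemma tanh_flip (x : ℝ) :
    (1 + Real.tanh x) * Real.exp (-(2 * x)) = 1 - Real.tanh x := by
  rw [Real.tanh_eq_sinh_div_cosh, Real.sinh_eq, Real.cosh_eq]
  have ha := Real.exp_pos x
  have hb := Real.exp_pos (-x)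
  have hab : Real.exp x * Real.exp (-x) = 1 := by
    rw [← Real.exp_add]; simp
  have h2 : Real.exp (-(2 * x)) = Real.exp (-x) * Real.exp (-x) := by
    rw [← Real.exp_add]; ring_nf
  rw [h2]
  field_simp
  nlinarith [ha, hb, hab]

private lemma abs_tanh_le_one (x : ℝ) : |Real.tanh x| ≤ 1 := by
  rw [Real.tanh_eq_sinh_div_cosh, Real.sinh_eq, Real.cosh_eq, abs_div]
  have ha := Real.exp_pos x
  have hb := Real.exp_pos (-x)
  rw [div_le_one (by positivity : (0:ℝ) < |(Real.exp x + Real.exp (-x)) / 2|)]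
  rw [abs_of_pos (by positivity : (0:ℝ) < (Real.exp x + Real.exp (-x)) / 2)]
  rcases abs_cases ((Real.exp x - Real.exp (-x)) / 2) with ⟨h, _⟩ | ⟨h, _⟩ <;>
    rw [h] <;> linarith

/-- **Gaussian identity for the BPSK channel.**
For every `s ≥ 0`, the standard-Gaussian expectation of `tanh(s + √s·z)` equals that of
`tanh²(s + √s·z)`. -/
theorem gaussian_tanh_eq_tanh_sq (s : ℝ) (hs : 0 ≤ s) :
    (∫ z : ℝ,
        Real.tanh (s + Real.sqrt s * z) *
          ((Real.sqrt (2 * Real.pi))⁻¹ * Real.exp (-z ^ 2 / 2)))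
      = ∫ z : ℝ,
          (Real.tanh (s + Real.sqrt s * z)) ^ 2 *
            ((Real.sqrt (2 * Real.pi))⁻¹ * Real.exp (-z ^ 2 / 2)) := by
  set c : ℝ := (Real.sqrt (2 * Real.pi))⁻¹ with hc
  set F : ℝ → ℝ := fun z =>
    (Real.tanh (s + Real.sqrt s * z) - (Real.tanh (s + Real.sqrt s * z)) ^ 2) *
      (c * Real.exp (-z ^ 2 / 2)) with hF
  have hss : Real.sqrt s * Real.sqrt s = s := Real.mul_self_sqrt hs
  -- antisymmetry under z ↦ -z - 2√s
  have hflip : ∀ z : ℝ, F (-z - 2 * Real.sqrt s) = -F z := by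
    intro z
    have hx : s + Real.sqrt s * (-z - 2 * Real.sqrt s) = -(s + Real.sqrt s * z) := by
      ring_nf
      nlinarith [hss]
    simp only [hF, hx, Real.tanh_neg]
    set t := Real.tanh (s + Real.sqrt s * z) with ht
    have hexp : Real.exp (-(-z - 2 * Real.sqrt s) ^ 2 / 2)
        = Real.exp (-(2 * (s + Real.sqrt s * z))) * Real.exp (-z ^ 2 / 2) := by
      rw [← Real.exp_add]
      congr 1
      nlinarith [hss]
    rw [hexp]
    have hkey : (1 + t) * Real.exp (-(2 * (s + Real.sqrt s * z))) = 1 - t :=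
      tanh_flip (s + Real.sqrt s * z)
    linear_combination (-t * c * Real.exp (-z ^ 2 / 2)) * hkey
  -- the integral of F is zero
  have hFzero : (∫ z : ℝ, F z) = 0 := by
    have h1 : (∫ z : ℝ, F z) = ∫ z : ℝ, F (-z - 2 * Real.sqrt s) := by
      have e1 : (∫ z : ℝ, F (-z - 2 * Real.sqrt s))
          = ∫ z : ℝ, (fun y => F (-y)) (z + 2 * Real.sqrt s) := by
        congr 1; ext z; simp [neg_add]; ring_nf
      rw [e1, integral_add_right_eq_self (fun y => F (-y)) (2 * Real.sqrt s),
        integral_neg_eq_self]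
    have h2 : (∫ z : ℝ, F (-z - 2 * Real.sqrt s)) = ∫ z : ℝ, -F z := by
      congr 1; ext z; exact hflip z
    rw [integral_neg] at h2
    linarith [h1.trans h2]
  -- integrability
  have hgauss : Integrable (fun z : ℝ => c * Real.exp (-z ^ 2 / 2)) := by
    have : Integrable (fun z : ℝ => Real.exp (-(1/2 : ℝ) * z ^ 2)) :=
      integrable_exp_neg_mul_sq (by norm_num)
    have e : (fun z : ℝ => c * Real.exp (-z ^ 2 / 2))
        = fun z : ℝ => c * Real.exp (-(1/2 : ℝ) * z ^ 2) := by
      ext z; congr 1; ring_nf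
    rw [e]
    exact this.const_mul c
  have hmeas : AEStronglyMeasurable (fun z : ℝ => Real.tanh (s + Real.sqrt s * z)) volume := by
    apply Continuous.aestronglyMeasurable
    have hct : Continuous Real.tanh := by
      have he : Real.tanh = fun x => Real.sinh x / Real.cosh x :=
        funext fun x => Real.tanh_eq_sinh_div_cosh x
      rw [he]
      exact Real.continuous_sinh.div Real.continuous_cosh fun x => (Real.cosh_pos x).ne'
    exact hct.comp (by continuity)
  have hint1 : Integrable (fun z : ℝ =>
      Real.tanh (s + Real.sqrt s * z) * (c * Real.exp (-z ^ 2 / 2))) :=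
    hgauss.bdd_mul (c := 1) hmeas (Filter.Eventually.of_forall fun z => by
      simpa [Real.norm_eq_abs] using abs_tanh_le_one (s + Real.sqrt s * z))
  have hint2 : Integrable (fun z : ℝ =>
      (Real.tanh (s + Real.sqrt s * z)) ^ 2 * (c * Real.exp (-z ^ 2 / 2))) := by
    refine hgauss.bdd_mul (c := 1) (hmeas.pow 2) (Filter.Eventually.of_forall fun z => ?_)
    have := abs_tanh_le_one (s + Real.sqrt s * z)
    rw [Real.norm_eq_abs, abs_pow]
    calc |Real.tanh (s + Real.sqrt s * z)| ^ 2 ≤ 1 ^ 2 := by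
          exact pow_le_pow_left₀ (abs_nonneg _) this 2
      _ = 1 := one_pow 2
  have hsub : (∫ z : ℝ, F z)
      = (∫ z : ℝ, Real.tanh (s + Real.sqrt s * z) * (c * Real.exp (-z ^ 2 / 2)))
        - ∫ z : ℝ, (Real.tanh (s + Real.sqrt s * z)) ^ 2 * (c * Real.exp (-z ^ 2 / 2)) := by
    rw [← integral_sub hint1 hint2]
    congr 1; ext z; simp [hF]; ring
  rw [hFzero] at hsub
  linarith [hsub]
end

section
/- Let L ≥ 1, let B ∈ ℝ^{L×L} satisfy ∑_{l=0}^{L−1} b_{l,m}² = 1 for every m, let α_l ≥ 0 for all l, and let σ² > 0. Define the density-evolution sequences by sir_m(0) = 0 for all m, and for i ≥ 1: σ_l²(i) = σ² + α_l ∑_{m=0}^{L−1} b_{l,m}²·mmse(sir_m(i−1)) and sir_m(i) = ∑_{l=0}^{L−1} b_{l,m}²/σ_l²(i), where mmse(s) = 1 − ∫_ℝ tanh(s + √s·z)·(2π)^{−1/2} e^{−z²/2} dz. Then for every m the limit sir_m* = lim_{i→∞} sir_m(i) exists in [0, 1/σ²], and the limits satisfy the fixed-point equations sir_m* = ∑_l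 b_{l,m}² / ( σ² + α_l ∑_{m'} b_{l,m'}²·mmse(sir_{m'}*) ) for all m. -/
open Filter

/-- The minimum mean-squared error of the BPSK-input real AWGN channel with
signal-to-noise ratio `s`. -/
noncomputable def mmse (s : ℝ) : ℝ :=
  1 - ∫ z : ℝ,
    Real.tanh (s + Real.sqrt s * z) * ((Real.sqrt (2 * Real.pi))⁻¹ * Real.exp (-z ^ 2 / 2))

open MeasureTheory Real

noncomputable def gpdf (z : ℝ) : ℝ := (Real.sqrt (2 * Real.pi))⁻¹ * Real.exp (-z ^ 2 / 2)


lemma gpdf_nonneg (z : ℝ) : 0 ≤ gpdf z := by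
  unfold gpdf; positivity

lemma continuous_gpdf : Continuous gpdf := by
  unfold gpdf; continuity

lemma integrable_gpdf : Integrable gpdf := by
  have h := (integrable_exp_neg_mul_sq (by norm_num : (0:ℝ) < 1/2)).const_mul
    (Real.sqrt (2 * Real.pi))⁻¹
  refine h.congr (Filter.Eventually.of_forall fun z => ?_)
  unfold gpdf; ring_nf

lemma integrable_abs_mul_gpdf : Integrable (fun z => |z| * gpdf z) := by
  have h := (integrable_mul_exp_neg_mul_sq (by norm_num : (0:ℝ) < 1/2)).abs.const_mul
    (Real.sqrt (2 * Real.pi))⁻¹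
  refine h.congr (Filter.Eventually.of_forall fun z => ?_)
  unfold gpdf
  simp only
  rw [abs_mul, abs_of_nonneg (Real.exp_nonneg _)]
  ring_nf

lemma integral_gpdf : ∫ z, gpdf z = 1 := by
  have h : ∫ z : ℝ, Real.exp (-(1/2) * z ^ 2) = Real.sqrt (Real.pi / (1/2)) :=
    integral_gaussian (1/2)
  have h2 : ∫ z, gpdf z = (Real.sqrt (2 * Real.pi))⁻¹ * ∫ z : ℝ, Real.exp (-(1/2) * z ^ 2) := by
    rw [← integral_const_mul]
    congr 1 with z
    unfold gpdf; ring_nf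
  rw [h2, h]
  rw [show Real.pi / (1/2) = 2 * Real.pi by ring]
  rw [inv_mul_cancel₀]
  positivity

lemma tanh_lt_one (x : ℝ) : Real.tanh x < 1 := by
  rw [Real.tanh_eq_sinh_div_cosh, div_lt_one (Real.cosh_pos x)]
  nlinarith [Real.cosh_sub_sinh x, Real.exp_pos (-x)]

lemma neg_one_lt_tanh (x : ℝ) : -1 < Real.tanh x := by
  rw [Real.tanh_eq_sinh_div_cosh, lt_div_iff₀ (Real.cosh_pos x)]
  nlinarith [Real.cosh_add_sinh x, Real.exp_pos x]

lemma abs_tanh_lt_one (x : ℝ) : |Real.tanh x| < 1 :=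
  abs_lt.2 ⟨_root_.neg_one_lt_tanh x, _root_.tanh_lt_one x⟩

lemma continuous_tanh : Continuous Real.tanh := by
  have : Real.tanh = fun x => Real.sinh x / Real.cosh x := funext Real.tanh_eq_sinh_div_cosh
  rw [this]
  exact Real.continuous_sinh.div Real.continuous_cosh fun x => (Real.cosh_pos x).ne'

lemma hasDerivAt_tanh (x : ℝ) : HasDerivAt Real.tanh (1 - Real.tanh x ^ 2) x := by
  have h : HasDerivAt (fun x => Real.sinh x / Real.cosh x)
      ((Real.cosh x * Real.cosh x - Real.sinh x * Real.sinh x) / Real.cosh x ^ 2) x :=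
    (Real.hasDerivAt_sinh x).div (Real.hasDerivAt_cosh x) (Real.cosh_pos x).ne'
  have he : Real.tanh = fun x => Real.sinh x / Real.cosh x := funext Real.tanh_eq_sinh_div_cosh
  rw [he]
  convert h using 1
  simp only
  have hc := (Real.cosh_pos x).ne'
  field_simp

/-- the integrand of mmse -/
lemma integrable_tanh_gpdf (s : ℝ) :
    Integrable (fun z => Real.tanh (s + Real.sqrt s * z) * gpdf z) := by
  refine integrable_gpdf.bdd_mul ?_ (c := 1) (Filter.Eventually.of_forall fun z => ?_)
  · exact (continuous_tanh.comp (by continuity)).aestronglyMeasurable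
  · exact le_of_lt (by simpa using _root_.abs_tanh_lt_one (s + Real.sqrt s * z))

lemma mmse_eq (s : ℝ) : mmse s = 1 - ∫ z, Real.tanh (s + Real.sqrt s * z) * gpdf z := rfl

lemma mmse_nonneg (s : ℝ) : 0 ≤ mmse s := by
  rw [mmse_eq, sub_nonneg, ← integral_gpdf]
  refine integral_mono (integrable_tanh_gpdf s) integrable_gpdf fun z => ?_
  have h1 := (_root_.tanh_lt_one (s + Real.sqrt s * z)).le
  nlinarith [gpdf_nonneg z]

lemma continuous_mmse : Continuous mmse := by
  have : Continuous fun s => ∫ z, Real.tanh (s + Real.sqrt s * z) * gpdf z := by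
    refine continuous_of_dominated (fun s => (integrable_tanh_gpdf s).1)
      (fun s => Filter.Eventually.of_forall fun z => ?_) integrable_gpdf
      (Filter.Eventually.of_forall fun z => ?_)
    · rw [Real.norm_eq_abs, abs_mul, abs_of_nonneg (gpdf_nonneg z)]
      calc |Real.tanh (s + Real.sqrt s * z)| * gpdf z ≤ 1 * gpdf z :=
            mul_le_mul_of_nonneg_right (_root_.abs_tanh_lt_one _).le (gpdf_nonneg z)
        _ = gpdf z := one_mul _
    · exact (continuous_tanh.comp (by continuity : Continuous fun s : ℝ => s + Real.sqrt s * z)).mul continuous_const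
  have he : mmse = fun s => 1 - ∫ z, Real.tanh (s + Real.sqrt s * z) * gpdf z := funext mmse_eq
  rw [he]
  exact continuous_const.sub this

lemma integrable_z_gpdf : Integrable (fun z => z * gpdf z) := by
  have h := (integrable_mul_exp_neg_mul_sq (by norm_num : (0:ℝ) < 1/2)).const_mul
    (Real.sqrt (2 * Real.pi))⁻¹
  refine h.congr (Filter.Eventually.of_forall fun z => ?_)
  unfold gpdf; simp only; ring_nf

lemma integrable_u_gpdf (s : ℝ) :
    Integrable (fun z => (1 - Real.tanh (s + Real.sqrt s * z) ^ 2) * gpdf z) := by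
  refine integrable_gpdf.bdd_mul ?_ (c := 1) (Filter.Eventually.of_forall fun z => ?_)
  · exact (continuous_const.sub ((continuous_tanh.comp (by continuity)).pow 2)).aestronglyMeasurable
  · have h := _root_.abs_tanh_lt_one (s + Real.sqrt s * z)
    rw [Real.norm_eq_abs, abs_le]
    constructor <;> nlinarith [abs_nonneg (Real.tanh (s + Real.sqrt s * z)), sq_abs (Real.tanh (s + Real.sqrt s * z))]

lemma integrable_tanh_u_gpdf (s : ℝ) :
    Integrable (fun z => Real.tanh (s + Real.sqrt s * z) *
      ((1 - Real.tanh (s + Real.sqrt s * z) ^ 2) * gpdf z)) := by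
  refine (integrable_u_gpdf s).bdd_mul ?_ (c := 1) (Filter.Eventually.of_forall fun z => ?_)
  · exact (continuous_tanh.comp (by continuity)).aestronglyMeasurable
  · exact (_root_.abs_tanh_lt_one _).le

lemma integrable_u_z_gpdf (s : ℝ) :
    Integrable (fun z => (1 - Real.tanh (s + Real.sqrt s * z) ^ 2) * (z * gpdf z)) := by
  refine integrable_z_gpdf.bdd_mul ?_ (c := 1) (Filter.Eventually.of_forall fun z => ?_)
  · exact (continuous_const.sub ((continuous_tanh.comp (by continuity)).pow 2)).aestronglyMeasurable
  · have h := _root_.abs_tanh_lt_one (s + Real.sqrt s * z)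
    rw [Real.norm_eq_abs, abs_le]
    constructor <;> nlinarith [abs_nonneg (Real.tanh (s + Real.sqrt s * z)), sq_abs (Real.tanh (s + Real.sqrt s * z))]

lemma hasDerivAt_gpdf (z : ℝ) : HasDerivAt gpdf (-z * gpdf z) z := by
  have h1 : HasDerivAt (fun z : ℝ => -z ^ 2 / 2) (-z) z := by
    have := ((hasDerivAt_pow 2 z).neg).div_const 2
    exact this.congr_deriv (by rw [show (2:ℕ) - 1 = 1 from rfl]; push_cast; ring)
  have h2 := (Real.hasDerivAt_exp (-z ^ 2 / 2)).comp z h1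
  have h3 := h2.const_mul (Real.sqrt (2 * Real.pi))⁻¹
  unfold gpdf
  exact h3.congr_deriv (by ring)

lemma tendsto_gpdf_atTop : Tendsto gpdf atTop (nhds 0) := by
  have h1 : Tendsto (fun z : ℝ => -z ^ 2 / 2) atTop atBot := by
    apply Filter.Tendsto.atBot_div_const (by norm_num : (0:ℝ) < 2)
    exact tendsto_neg_atTop_atBot.comp (tendsto_pow_atTop (by norm_num : 2 ≠ 0))
  have h2 : Tendsto (fun z : ℝ => Real.exp (-z ^ 2 / 2)) atTop (nhds 0) :=
    Real.tendsto_exp_atBot.comp h1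
  have h3 := h2.const_mul (Real.sqrt (2 * Real.pi))⁻¹
  rw [show (0:ℝ) = (Real.sqrt (2 * Real.pi))⁻¹ * 0 by ring] 
  exact h3

lemma tendsto_gpdf_atBot : Tendsto gpdf atBot (nhds 0) := by
  have h := tendsto_gpdf_atTop.comp tendsto_neg_atBot_atTop
  refine h.congr fun z => ?_
  unfold gpdf; simp

lemma hasDerivAt_H (s : ℝ) (hs : 0 < s) (z : ℝ) :
    HasDerivAt (fun z => -((1 - Real.tanh (s + Real.sqrt s * z) ^ 2) * gpdf z))
      (2 * Real.sqrt s * (Real.tanh (s + Real.sqrt s * z) *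
        ((1 - Real.tanh (s + Real.sqrt s * z) ^ 2) * gpdf z)) +
       (1 - Real.tanh (s + Real.sqrt s * z) ^ 2) * (z * gpdf z)) z := by
  have hinner : HasDerivAt (fun z : ℝ => s + Real.sqrt s * z) (Real.sqrt s) z := by
    have := ((hasDerivAt_id z).const_mul (Real.sqrt s)).const_add s
    simpa using this
  have htanh : HasDerivAt (fun z => Real.tanh (s + Real.sqrt s * z))
      ((1 - Real.tanh (s + Real.sqrt s * z) ^ 2) * Real.sqrt s) z :=
    (hasDerivAt_tanh _).comp z hinner
  have hu : HasDerivAt (fun z => 1 - Real.tanh (s + Real.sqrt s * z) ^ 2)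
      (-(2 * Real.tanh (s + Real.sqrt s * z) *
        ((1 - Real.tanh (s + Real.sqrt s * z) ^ 2) * Real.sqrt s))) z := by
    have := ((htanh.pow 2).const_sub 1)
    exact this.congr_deriv (by rw [show (2:ℕ) - 1 = 1 from rfl]; push_cast; ring)
  have := (hu.mul (hasDerivAt_gpdf z)).neg
  exact this.congr_deriv (by ring)

lemma ibp (s : ℝ) (hs : 0 < s) :
    ∫ z, (1 - Real.tanh (s + Real.sqrt s * z) ^ 2) * (z * gpdf z) =
      (-2 * Real.sqrt s) * ∫ z, Real.tanh (s + Real.sqrt s * z) *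
        ((1 - Real.tanh (s + Real.sqrt s * z) ^ 2) * gpdf z) := by
  set H : ℝ → ℝ := fun z => -((1 - Real.tanh (s + Real.sqrt s * z) ^ 2) * gpdf z) with hH
  set Hd : ℝ → ℝ := fun z => 2 * Real.sqrt s * (Real.tanh (s + Real.sqrt s * z) *
        ((1 - Real.tanh (s + Real.sqrt s * z) ^ 2) * gpdf z)) +
       (1 - Real.tanh (s + Real.sqrt s * z) ^ 2) * (z * gpdf z) with hHd
  have hderiv : ∀ z, HasDerivAt H (Hd z) z := hasDerivAt_H s hs
  have hint : Integrable Hd := ((integrable_tanh_u_gpdf s).const_mul _).add (integrable_u_z_gpdf s)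
  have habs : ∀ z, -gpdf z ≤ H z ∧ H z ≤ gpdf z := by
    intro z
    have h := _root_.abs_tanh_lt_one (s + Real.sqrt s * z)
    have h2 := sq_abs (Real.tanh (s + Real.sqrt s * z))
    have h3 := gpdf_nonneg z
    have ht2 : Real.tanh (s + Real.sqrt s * z) ^ 2 < 1 := by
      nlinarith [abs_nonneg (Real.tanh (s + Real.sqrt s * z))]
    constructor <;> simp only [hH] <;>
      nlinarith [sq_nonneg (Real.tanh (s + Real.sqrt s * z))]
  have htop : Tendsto H atTop (nhds 0) := by
    refine tendsto_of_tendsto_of_tendsto_of_le_of_le (f := H) (g := fun z => -gpdf z) (h := gpdf)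
      (by simpa using tendsto_gpdf_atTop.neg) tendsto_gpdf_atTop
      (fun z => (habs z).1) (fun z => (habs z).2)
  have hbot : Tendsto H atBot (nhds 0) := by
    refine tendsto_of_tendsto_of_tendsto_of_le_of_le (f := H) (g := fun z => -gpdf z) (h := gpdf)
      (by simpa using tendsto_gpdf_atBot.neg) tendsto_gpdf_atBot
      (fun z => (habs z).1) (fun z => (habs z).2)
  have h1 : ∫ z in Set.Iic (0:ℝ), Hd z = H 0 - 0 :=
    integral_Iic_of_hasDerivAt_of_tendsto (hderiv 0).continuousAt.continuousWithinAt
      (fun x _ => hderiv x) hint.integrableOn hbot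
  have h2 : ∫ z in Set.Ioi (0:ℝ), Hd z = 0 - H 0 :=
    integral_Ioi_of_hasDerivAt_of_tendsto (hderiv 0).continuousAt.continuousWithinAt
      (fun x _ => hderiv x) hint.integrableOn htop
  have h3 : ∫ z, Hd z = 0 := by
    rw [← intervalIntegral.integral_Iic_add_Ioi hint.integrableOn hint.integrableOn, h1, h2]; ring
  rw [integral_add ((integrable_tanh_u_gpdf s).const_mul _) (integrable_u_z_gpdf s),
    MeasureTheory.integral_const_mul] at h3
  linarith [h3]

lemma hasDerivAt_g (s : ℝ) (hs : 0 < s) :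
    HasDerivAt (fun t => ∫ z, Real.tanh (t + Real.sqrt t * z) * gpdf z)
      (∫ z, (1 - Real.tanh (s + Real.sqrt s * z) ^ 2) *
        (1 + 1 / (2 * Real.sqrt s) * z) * gpdf z) s := by
  have hε : (0:ℝ) < s / 2 := by linarith
  have hsqrt : 0 < Real.sqrt (s / 2) := Real.sqrt_pos.2 hε
  set bound : ℝ → ℝ := fun z => (1 + 1 / (2 * Real.sqrt (s / 2)) * |z|) * gpdf z with hb
  have key := hasDerivAt_integral_of_dominated_loc_of_deriv_le (μ := MeasureTheory.volume)
    (x₀ := s) (s := Metric.ball s (s / 2))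
    (F := fun t z => Real.tanh (t + Real.sqrt t * z) * gpdf z)
    (F' := fun t z => (1 - Real.tanh (t + Real.sqrt t * z) ^ 2) *
        (1 + 1 / (2 * Real.sqrt t) * z) * gpdf z)
    (bound := bound) (Metric.ball_mem_nhds s hε)
    (Filter.Eventually.of_forall fun t => (integrable_tanh_gpdf t).1)
    (integrable_tanh_gpdf s)
    (Continuous.aestronglyMeasurable
      (((continuous_const.sub ((continuous_tanh.comp (by continuity)).pow 2)).mul
        (by continuity)).mul continuous_gpdf))
    (Filter.Eventually.of_forall fun z => ?_)
    (by
      have : Integrable (fun z => gpdf z + 1 / (2 * Real.sqrt (s / 2)) * (|z| * gpdf z)) :=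
        integrable_gpdf.add (integrable_abs_mul_gpdf.const_mul _)
      refine this.congr (Filter.Eventually.of_forall fun z => ?_)
      simp only [hb]; ring)
    (Filter.Eventually.of_forall fun z => fun t ht => ?_)
  · exact key.2
  · -- bound
    intro t ht
    have h1 : 0 < t := by
      have := Metric.mem_ball.1 ht
      have := abs_lt.1 (by simpa [Real.dist_eq] using this)
      linarith [this.1]
    have hsq : Real.sqrt (s / 2) ≤ Real.sqrt t := by
      apply Real.sqrt_le_sqrt
      have := Metric.mem_ball.1 ht
      have := abs_lt.1 (by simpa [Real.dist_eq] using this)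
      linarith [this.1]
    have ht2 : Real.tanh (t + Real.sqrt t * z) ^ 2 < 1 := by
      nlinarith [_root_.abs_tanh_lt_one (t + Real.sqrt t * z),
        abs_nonneg (Real.tanh (t + Real.sqrt t * z)),
        sq_abs (Real.tanh (t + Real.sqrt t * z))]
    rw [Real.norm_eq_abs, abs_mul, abs_mul]
    rw [abs_of_nonneg (gpdf_nonneg z)]
    have e1 : |1 - Real.tanh (t + Real.sqrt t * z) ^ 2| ≤ 1 := by
      rw [abs_le]; constructor <;> nlinarith [sq_nonneg (Real.tanh (t + Real.sqrt t * z))]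
    have e2 : |1 + 1 / (2 * Real.sqrt t) * z| ≤ 1 + 1 / (2 * Real.sqrt (s / 2)) * |z| := by
      calc |1 + 1 / (2 * Real.sqrt t) * z| ≤ 1 + |1 / (2 * Real.sqrt t) * z| := by
            simpa using abs_add_le 1 (1 / (2 * Real.sqrt t) * z)
        _ ≤ 1 + 1 / (2 * Real.sqrt (s / 2)) * |z| := by
            rw [abs_mul]
            have : |1 / (2 * Real.sqrt t)| = 1 / (2 * Real.sqrt t) :=
              abs_of_nonneg (by positivity)
            rw [this]
            have : 1 / (2 * Real.sqrt t) ≤ 1 / (2 * Real.sqrt (s / 2)) := by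
              apply one_div_le_one_div_of_le (by positivity)
              linarith
            nlinarith [abs_nonneg z]
    calc |1 - Real.tanh (t + Real.sqrt t * z) ^ 2| * |1 + 1 / (2 * Real.sqrt t) * z| * gpdf z
        ≤ 1 * (1 + 1 / (2 * Real.sqrt (s / 2)) * |z|) * gpdf z := by
          apply mul_le_mul_of_nonneg_right _ (gpdf_nonneg z)
          apply mul_le_mul e1 e2 (abs_nonneg _) (by norm_num)
      _ = bound z := by simp only [hb]; ring
  · -- differentiability
    have h1 : 0 < t := by
      have := Metric.mem_ball.1 ht
      have := abs_lt.1 (by simpa [Real.dist_eq] using this)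
      linarith [this.1]
    have hinner : HasDerivAt (fun t : ℝ => t + Real.sqrt t * z)
        (1 + 1 / (2 * Real.sqrt t) * z) t := by
      have h2 := ((Real.hasDerivAt_sqrt h1.ne').mul_const z)
      have := (hasDerivAt_id t).add h2
      exact this
    have := ((hasDerivAt_tanh _).comp t hinner).mul_const (gpdf z)
    exact this

lemma D_nonneg (s : ℝ) (hs : 0 < s) :
    0 ≤ ∫ z, (1 - Real.tanh (s + Real.sqrt s * z) ^ 2) *
      (1 + 1 / (2 * Real.sqrt s) * z) * gpdf z := by
  have hsqrt : 0 < Real.sqrt s := Real.sqrt_pos.2 hs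
  have hsplit : ∫ z, (1 - Real.tanh (s + Real.sqrt s * z) ^ 2) *
      (1 + 1 / (2 * Real.sqrt s) * z) * gpdf z =
      (∫ z, (1 - Real.tanh (s + Real.sqrt s * z) ^ 2) * gpdf z) +
      (1 / (2 * Real.sqrt s)) * ∫ z, (1 - Real.tanh (s + Real.sqrt s * z) ^ 2) * (z * gpdf z) := by
    rw [← MeasureTheory.integral_const_mul, ← integral_add (integrable_u_gpdf s)
      (((integrable_u_z_gpdf s)).const_mul _)]
    congr 1 with z
    ring
  rw [hsplit, ibp s hs]
  have hcoef : 1 / (2 * Real.sqrt s) * (-2 * Real.sqrt s) = -1 := by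
    field_simp
  rw [← mul_assoc, hcoef, neg_one_mul, ← sub_eq_add_neg,
    ← integral_sub (integrable_u_gpdf s) (integrable_tanh_u_gpdf s)]
  apply integral_nonneg
  intro z
  simp only [Pi.zero_apply]
  have h := _root_.abs_tanh_lt_one (s + Real.sqrt s * z)
  have h2 := sq_abs (Real.tanh (s + Real.sqrt s * z))
  have h3 := gpdf_nonneg z
  have ht1 : Real.tanh (s + Real.sqrt s * z) ≤ 1 := (_root_.tanh_lt_one _).le
  have ht2 : Real.tanh (s + Real.sqrt s * z) ^ 2 ≤ 1 := by
    nlinarith [abs_nonneg (Real.tanh (s + Real.sqrt s * z))]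
  nlinarith [mul_nonneg (mul_nonneg (sub_nonneg.2 ht2) (sub_nonneg.2 ht1)) h3]

lemma g_monotoneOn :
    MonotoneOn (fun s => ∫ z, Real.tanh (s + Real.sqrt s * z) * gpdf z) (Set.Ici (0:ℝ)) := by
  apply monotoneOn_of_deriv_nonneg (convex_Ici 0)
  · have : Continuous fun s => ∫ z, Real.tanh (s + Real.sqrt s * z) * gpdf z := by
      have hc := continuous_mmse
      have he : (fun s => ∫ z, Real.tanh (s + Real.sqrt s * z) * gpdf z)
          = fun s => 1 - mmse s := by
        funext s; rw [mmse_eq]; ring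
      rw [he]
      exact continuous_const.sub hc
    exact this.continuousOn
  · rw [interior_Ici]
    intro s hs
    exact (hasDerivAt_g s hs).differentiableAt.differentiableWithinAt
  · rw [interior_Ici]
    intro s hs
    rw [(hasDerivAt_g s hs).deriv]
    exact D_nonneg s hs

lemma mmse_antitoneOn : AntitoneOn mmse (Set.Ici (0:ℝ)) := by
  intro a ha b hb hab
  rw [mmse_eq, mmse_eq]
  have := g_monotoneOn ha hb hab
  linarith

/-- **Convergence of density evolution to a fixed point.**
For the coupled DE recursion `sir_m(0) = 0`,
`σ_l²(i) = σ² + α_l ∑_m b_{l,m}²·mmse(sir_m(i−1))`,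
`sir_m(i) = ∑_l b_{l,m}²/σ_l²(i)`, with unit column square-sums, `α_l ≥ 0`, and
`σ² > 0`, each `sir_m(i)` converges as `i → ∞` to a limit `sir_m* ∈ [0, 1/σ²]`, and the
limits satisfy the fixed-point equations
`sir_m* = ∑_l b_{l,m}²/(σ² + α_l ∑_{m'} b_{l,m'}²·mmse(sir_{m'}*))`. -/
theorem de_tendsto_fixed_point (L : ℕ) (hL : 1 ≤ L) (B : Fin L → Fin L → ℝ)
    (hB : ∀ m : Fin L, ∑ l : Fin L, (B l m) ^ 2 = 1)
    (α : Fin L → ℝ) (hα : ∀ l, 0 ≤ α l) (σ2 : ℝ) (hσ2 : 0 < σ2)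
    (sir : ℕ → Fin L → ℝ) (sigma2 : ℕ → Fin L → ℝ)
    (hsir0 : ∀ m, sir 0 m = 0)
    (hsigma2 : ∀ i l,
      sigma2 (i + 1) l = σ2 + α l * ∑ m : Fin L, (B l m) ^ 2 * mmse (sir i m))
    (hsir : ∀ i m, sir (i + 1) m = ∑ l : Fin L, (B l m) ^ 2 / sigma2 (i + 1) l) :
    ∃ sirStar : Fin L → ℝ,
      (∀ m, sirStar m ∈ Set.Icc (0 : ℝ) (1 / σ2)) ∧
      (∀ m, Tendsto (fun i : ℕ => sir i m) atTop (nhds (sirStar m))) ∧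
      (∀ m, sirStar m =
        ∑ l : Fin L,
          (B l m) ^ 2 /
            (σ2 + α l * ∑ m' : Fin L, (B l m') ^ 2 * mmse (sirStar m'))) := by
  set F : (Fin L → ℝ) → Fin L → ℝ := fun x m =>
    ∑ l : Fin L, (B l m) ^ 2 / (σ2 + α l * ∑ m' : Fin L, (B l m') ^ 2 * mmse (x m')) with hF
  have hden : ∀ (x : Fin L → ℝ) (l : Fin L),
      σ2 ≤ σ2 + α l * ∑ m' : Fin L, (B l m') ^ 2 * mmse (x m') := by
    intro x l
    have h1 : 0 ≤ ∑ m' : Fin L, (B l m') ^ 2 * mmse (x m') :=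
      Finset.sum_nonneg fun m' _ => mul_nonneg (sq_nonneg _) (mmse_nonneg _)
    nlinarith [hα l]
  have hdenpos : ∀ (x : Fin L → ℝ) (l : Fin L),
      0 < σ2 + α l * ∑ m' : Fin L, (B l m') ^ 2 * mmse (x m') :=
    fun x l => lt_of_lt_of_le hσ2 (hden x l)
  have hFeq : ∀ i m, sir (i + 1) m = F (sir i) m := by
    intro i m
    rw [hsir i m, hF]
    exact Finset.sum_congr rfl fun l _ => by rw [hsigma2 i l]
  have hF_nonneg : ∀ x m, 0 ≤ F x m := fun x m =>
    Finset.sum_nonneg fun l _ => div_nonneg (sq_nonneg _) (hdenpos x l).le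
  have hF_le : ∀ x m, F x m ≤ 1 / σ2 := by
    intro x m
    calc F x m ≤ ∑ l : Fin L, (B l m) ^ 2 / σ2 :=
          Finset.sum_le_sum fun l _ =>
            div_le_div_of_nonneg_left (sq_nonneg _) hσ2 (hden x l)
      _ = 1 / σ2 := by rw [← Finset.sum_div, hB m]
  have h0 : ∀ i m, 0 ≤ sir i m := by
    intro i m
    cases i with
    | zero => rw [hsir0]
    | succ n => rw [hFeq n m]; exact hF_nonneg _ _
  have hub : ∀ i m, sir i m ≤ 1 / σ2 := by
    intro i m
    cases i with
    | zero => rw [hsir0]; positivity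
    | succ n => rw [hFeq n m]; exact hF_le _ _
  have hFmono : ∀ (x y : Fin L → ℝ), (∀ m, 0 ≤ x m) → (∀ m, x m ≤ y m) →
      ∀ m, F x m ≤ F y m := by
    intro x y hx hxy m
    refine Finset.sum_le_sum fun l _ => ?_
    refine div_le_div_of_nonneg_left (sq_nonneg _) (hdenpos y l) ?_
    have hsum : ∑ m' : Fin L, (B l m') ^ 2 * mmse (y m') ≤
        ∑ m' : Fin L, (B l m') ^ 2 * mmse (x m') := by
      refine Finset.sum_le_sum fun m' _ => ?_
      refine mul_le_mul_of_nonneg_left ?_ (sq_nonneg _)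
      exact mmse_antitoneOn (Set.mem_Ici.2 (hx m'))
        (Set.mem_Ici.2 ((hx m').trans (hxy m'))) (hxy m')
    nlinarith [hα l]
  have hstep : ∀ i m, sir i m ≤ sir (i + 1) m := by
    intro i
    induction i with
    | zero => intro m; rw [hsir0]; exact h0 1 m
    | succ n ih =>
      intro m
      rw [hFeq n m, hFeq (n + 1) m]
      exact hFmono (sir n) (sir (n + 1)) (h0 n) ih m
  have hmono : ∀ m, Monotone fun i => sir i m := fun m =>
    monotone_nat_of_le_succ fun i => hstep i m
  have hbdd : ∀ m, BddAbove (Set.range fun i => sir i m) := by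
    intro m
    exact ⟨1 / σ2, by rintro _ ⟨i, rfl⟩; exact hub i m⟩
  set sirStar : Fin L → ℝ := fun m => ⨆ i, sir i m with hS
  have htend : ∀ m, Tendsto (fun i => sir i m) atTop (nhds (sirStar m)) := fun m =>
    tendsto_atTop_ciSup (hmono m) (hbdd m)
  refine ⟨sirStar, fun m => ⟨?_, ?_⟩, htend, fun m => ?_⟩
  · have := le_ciSup (hbdd m) 0
    rw [hsir0] at this
    exact this
  · exact ciSup_le fun i => hub i m
  · have h1 : Tendsto (fun i => sir (i + 1) m) atTop (nhds (sirStar m)) :=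
      (htend m).comp (tendsto_add_atTop_nat 1)
    have h2 : Tendsto (fun i => F (sir i) m) atTop (nhds (F sirStar m)) := by
      rw [hF]
      apply tendsto_finset_sum
      intro l _
      refine Tendsto.div tendsto_const_nhds ?_ (hdenpos sirStar l).ne'
      apply Tendsto.const_add
      apply Tendsto.const_mul
      apply tendsto_finset_sum
      intro m' _
      exact ((continuous_mmse.tendsto _).comp (htend m')).const_mul _
    have h3 : Tendsto (fun i => sir (i + 1) m) atTop (nhds (F sirStar m)) :=
      h2.congr fun i => (hFeq i m).symm
    exact tendsto_nhds_unique h1 h3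
end
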